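/- Let C be a unitary 2^n × 2^n complex matrix, let S ⊆ T ⊆ {1,…,n} be sets of qubits, and for each i ∈ T let T̄_{(i)} ∈ {T_{(i)}, T_{(i)}†} be a T or T† gate on qubit i. Suppose C Z_{(j)} C† = Z_{(j)} for every j ∈ S. Then C (∏_{i∈T} T̄_{(i)}) C† = (∏_{j∈S} T̄_{(j)}) · C (∏_{i∈T∖S} T̄_{(i)}) C†. That is, the T/T† gates on trivially conjugated qubits can be pulled out of the conjugation unchanged. -/

import Mathlib

open Matrix Complex

noncomputable section

/-- The single-qubit T gate `diag(1, e^{iπ/4})`. -/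
def Tgate : Matrix (Fin 2) (Fin 2) ℂ :=
  !![1, 0; 0, Complex.exp (Real.pi * Complex.I / 4)]

/-- The single-qubit Pauli Z gate `diag(1, -1)`. -/
def Zgate : Matrix (Fin 2) (Fin 2) ℂ := !![1, 0; 0, -1]

/-- The n-qubit gate (a `2^n × 2^n` matrix, indexed by `Fin n → Fin 2`)
applying the single-qubit gate `A` on qubit `q` and the identity elsewhere. -/
def gateOn (n : ℕ) (q : Fin n) (A : Matrix (Fin 2) (Fin 2) ℂ) :
    Matrix (Fin n → Fin 2) (Fin n → Fin 2) ℂ :=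
  fun x y => A (x q) (y q) * ∏ i ∈ Finset.univ.erase q, (if x i = y i then (1 : ℂ) else 0)

/-- `R(P) = (1/2)(1 + e^{iπ/4})·I + (1/2)(1 − e^{iπ/4})·P`. -/
def Rop {m : Type*} [Fintype m] [DecidableEq m] (P : Matrix m m ℂ) : Matrix m m ℂ :=
  ((1 + Complex.exp (Real.pi * Complex.I / 4)) / 2) • (1 : Matrix m m ℂ)
    + ((1 - Complex.exp (Real.pi * Complex.I / 4)) / 2) • P

/-- `R†(P) = (1/2)(1 + e^{−iπ/4})·I + (1/2)(1 − e^{−iπ/4})·P`. -/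
def RopDag {m : Type*} [Fintype m] [DecidableEq m] (P : Matrix m m ℂ) : Matrix m m ℂ :=
  ((1 + Complex.exp (-(Real.pi * Complex.I / 4))) / 2) • (1 : Matrix m m ℂ)
    + ((1 - Complex.exp (-(Real.pi * Complex.I / 4))) / 2) • P

/-- The four single-qubit Pauli basis matrices `I, X, Y, Z`. -/
def pauli1 : Fin 4 → Matrix (Fin 2) (Fin 2) ℂ :=
  ![1, !![0, 1; 1, 0], !![0, -Complex.I; Complex.I, 0], !![1, 0; 0, -1]]

/-- The `n`-fold Kronecker product `Q_1 ⊗ ⋯ ⊗ Q_n` with each `Q_i ∈ {I, X, Y, Z}`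
selected by `f : Fin n → Fin 4`. -/
def pauliN (n : ℕ) (f : Fin n → Fin 4) : Matrix (Fin n → Fin 2) (Fin n → Fin 2) ℂ :=
  fun x y => ∏ i, pauli1 (f i) (x i) (y i)

/-- The channel representation of a `2^n × 2^n` matrix `U`: the `4^n × 4^n` matrix
with `(P, Q)` entry `2^{-n}·Tr(P U Q U†)`, indexed by the Pauli basis. -/
def chan (n : ℕ) (U : Matrix (Fin n → Fin 2) (Fin n → Fin 2) ℂ) :
    Matrix (Fin n → Fin 4) (Fin n → Fin 4) ℂ :=
  fun P Q => ((1 : ℂ) / 2 ^ n) * (pauliN n P * U * pauliN n Q * Uᴴ).trace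

/-- T/T† gates on trivially conjugated qubits can be pulled out of the
conjugation unchanged:
`C (∏_{i∈T} T̄_{(i)}) C† = (∏_{j∈S} T̄_{(j)}) · C (∏_{i∈T∖S} T̄_{(i)}) C†`. -/

lemma gateOn_one (n : ℕ) (q : Fin n) : gateOn n q (1 : Matrix (Fin 2) (Fin 2) ℂ) = 1 := by
  funext x y
  simp only [gateOn, Matrix.one_apply]
  trans (∏ i, if x i = y i then (1:ℂ) else 0)
  · exact Finset.mul_prod_erase Finset.univ (fun i => if x i = y i then (1:ℂ) else 0)
      (Finset.mem_univ q)
  by_cases h : x = y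
  · simp [h]
  · rw [if_neg h]
    obtain ⟨i, hi⟩ := Function.ne_iff.mp h
    exact Finset.prod_eq_zero (Finset.mem_univ i) (if_neg hi)

lemma gateOn_comb (n : ℕ) (q : Fin n) (a b : ℂ) (A B : Matrix (Fin 2) (Fin 2) ℂ) :
    gateOn n q (a • A + b • B) = a • gateOn n q A + b • gateOn n q B := by
  funext x y
  simp only [gateOn, Matrix.add_apply, Matrix.smul_apply, Pi.add_apply, Pi.smul_apply,
    smul_eq_mul]
  ring

lemma Tgate_comb : Tgate = ((1 + Complex.exp (Real.pi * Complex.I / 4)) / 2) • (1 : Matrix (Fin 2) (Fin 2) ℂ) + ((1 - Complex.exp (Real.pi * Complex.I / 4)) / 2) • Zgate := by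
  ext i j
  fin_cases i <;> fin_cases j <;>
    simp [Tgate, Zgate, Matrix.one_apply, Matrix.add_apply, Matrix.smul_apply] <;> try ring

lemma Zgate_herm : Zgateᴴ = Zgate := by
  ext i j
  fin_cases i <;> fin_cases j <;> simp [Zgate, Matrix.conjTranspose_apply]

lemma Tgate_dag_comb : Tgateᴴ = (star ((1 + Complex.exp (Real.pi * Complex.I / 4)) / 2)) • (1 : Matrix (Fin 2) (Fin 2) ℂ) + (star ((1 - Complex.exp (Real.pi * Complex.I / 4)) / 2)) • Zgate := by
  rw [Tgate_comb]
  simp [Matrix.conjTranspose_add, Matrix.conjTranspose_smul, Zgate_herm]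

lemma gateOn_conjTranspose (n : ℕ) (q : Fin n) (A : Matrix (Fin 2) (Fin 2) ℂ) :
    (gateOn n q A)ᴴ = gateOn n q Aᴴ := by
  funext x y
  simp only [gateOn, Matrix.conjTranspose_apply, star_mul', star_prod]
  congr 1
  refine Finset.prod_congr rfl (fun i _ => ?_)
  by_cases h : x i = y i
  · simp [h]
  · rw [if_neg (fun hh => h hh.symm), if_neg h]
    simp

theorem pull_out_trivially_conjugated (n : ℕ)
    (C : Matrix (Fin n → Fin 2) (Fin n → Fin 2) ℂ)
    (hC : C ∈ Matrix.unitaryGroup (Fin n → Fin 2) ℂ)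
    (S T : Finset (Fin n)) (hST : S ⊆ T)
    (Tb : Fin n → Matrix (Fin n → Fin 2) (Fin n → Fin 2) ℂ)
    (hTb : ∀ i, Tb i = gateOn n i Tgate ∨ Tb i = (gateOn n i Tgate)ᴴ)
    (hcomm : ∀ i j, i ≠ j → Commute (Tb i) (Tb j))
    (htriv : ∀ j ∈ S, C * gateOn n j Zgate * Cᴴ = gateOn n j Zgate) :
    C * T.noncommProd Tb (fun i _ j _ h => hcomm i j h) * Cᴴ =
      S.noncommProd Tb (fun i _ j _ h => hcomm i j h) *
        (C * (T \ S).noncommProd Tb (fun i _ j _ h => hcomm i j h) * Cᴴ) := by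
  have hCs : Cᴴ * C = 1 := by
    have := hC.1
    rwa [Matrix.star_eq_conjTranspose] at this
  -- each Tb j with j ∈ S commutes with C
  have hcommC : ∀ j ∈ S, Commute C (Tb j) := by
    intro j hj
    have hZ : C * gateOn n j Zgate = gateOn n j Zgate * C := by
      calc C * gateOn n j Zgate = C * gateOn n j Zgate * (Cᴴ * C) := by
            rw [hCs, mul_one]
        _ = (C * gateOn n j Zgate * Cᴴ) * C := by rw [← mul_assoc]
        _ = gateOn n j Zgate * C := by rw [htriv j hj]
    have key : ∀ a b : ℂ, Commute C (a • (1 : Matrix (Fin n → Fin 2) (Fin n → Fin 2) ℂ)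
        + b • gateOn n j Zgate) := by
      intro a b
      show C * _ = _ * C
      rw [mul_add, add_mul, Matrix.mul_smul, Matrix.mul_smul, Matrix.smul_mul,
        Matrix.smul_mul, mul_one, one_mul, hZ]
    rcases hTb j with h | h
    · rw [h, Tgate_comb, gateOn_comb]
      rw [gateOn_one]
      exact key _ _
    · rw [h, gateOn_conjTranspose, Tgate_dag_comb, gateOn_comb, gateOn_one]
      exact key _ _
  have hdisj : Disjoint S (T \ S) := Finset.disjoint_sdiff
  have hunion : S ∪ (T \ S) = T := Finset.union_sdiff_of_subset hST
  have hsplit : T.noncommProd Tb (fun i _ j _ h => hcomm i j h) =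
      S.noncommProd Tb (fun i _ j _ h => hcomm i j h) *
      (T \ S).noncommProd Tb (fun i _ j _ h => hcomm i j h) := by
    rw [Finset.noncommProd_congr hunion.symm (fun _ _ => rfl)
      (fun i hi j hj h => hcomm i j h)]
    exact Finset.noncommProd_union_of_disjoint hdisj Tb _
  have hCS : Commute C (S.noncommProd Tb (fun i _ j _ h => hcomm i j h)) :=
    Finset.noncommProd_commute _ _ _ _ hcommC
  rw [hsplit, ← mul_assoc, hCS.eq]
  simp only [mul_assoc]
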